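/- For each j ≥ 1, any ball B(p/q, 1/q^2) with p,q integers, 0 ≤ p ≤ q-1, and q^2 ∈ (2^j, 2^{j+1}], contains at most 4 distinct irreducible rational numbers p'/q' (with gcd(p',q') = 1) satisfying (q')^2 ∈ (2^j, 2^{j+1}]. Consequently, the rational system R = ((p/q, 1/q^2))_{q≥1, 0≤p≤q-1} satisfies the weak redundancy condition C_1 with constant sequence N_j = 4. -/

import Mathlib

open Metric Set Filter

noncomputable section

/-- Two distinct rationals differ by at least the inverse product of denominators. -/
lemma rat_gap (z z' : ℚ) (h : z ≠ z') :
    ((z.den : ℚ) * z'.den)⁻¹ ≤ |z - z'| := by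
  have hd : (0:ℚ) < (z.den : ℚ) * z'.den := by positivity
  set n : ℤ := z.num * z'.den - z'.num * z.den with hn
  have key : (z - z') * ((z.den : ℚ) * z'.den) = (n : ℚ) := by
    have a := Rat.mul_den_eq_num z
    have b := Rat.mul_den_eq_num z'
    rw [hn]
    push_cast
    linear_combination (z'.den : ℚ) * a - (z.den : ℚ) * b
  have hn0 : n ≠ 0 := by
    intro h0
    apply h
    have : (z - z') * ((z.den : ℚ) * z'.den) = 0 := by rw [key, h0]; simp
    have := mul_eq_zero.mp this
    rcases this with h' | h'
    · linarith [sub_eq_zero.mp h']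
    · exact absurd h' hd.ne'
  have habs : (1:ℚ) ≤ |(n : ℚ)| := by
    have := Int.one_le_abs hn0
    exact_mod_cast this
  have h2 : |z - z'| = |(n : ℚ)| / ((z.den : ℚ) * z'.den) := by
    rw [eq_div_iff hd.ne', ← abs_of_pos hd, ← abs_mul, key]
  rw [h2, inv_eq_one_div]
  gcongr

/-- Floors of `w`-separated points (divided by `w`) are distinct. -/
lemma floor_sep {K : Type*} [Field K] [LinearOrder K] [IsStrictOrderedRing K] [FloorRing K] {w u v : K}
    (hw : 0 < w) (h : u + w ≤ v) : ⌊u / w⌋ < ⌊v / w⌋ := by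
  have hd : u / w + 1 ≤ v / w := by
    rw [div_add' _ _ _ hw.ne', div_le_div_iff_of_pos_right hw]
    linarith
  calc ⌊u / w⌋ < ⌊u / w⌋ + 1 := by omega
  _ = ⌊u / w + 1⌋ := by rw [Int.floor_add_one]
  _ ≤ ⌊v / w⌋ := Int.floor_le_floor hd

/-- At most 4 points in an interval of length `< 4w` pairwise `w`-separated. -/
lemma count4 {K : Type*} [Field K] [LinearOrder K] [IsStrictOrderedRing K] [FloorRing K] {t : Set K} {a w : K}
    (hw : 0 < w) (hb : ∀ y ∈ t, a ≤ y ∧ y < a + 4 * w)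
    (hsep : ∀ y ∈ t, ∀ y' ∈ t, y ≠ y' → w ≤ |y - y'|) : t.ncard ≤ 4 := by
  have hmono : ∀ u ∈ t, ∀ v ∈ t, u < v → ⌊(u - a)/w⌋ < ⌊(v - a)/w⌋ := by
    intro u hu v hv huv
    have hs := hsep u hu v hv huv.ne
    rw [abs_sub_comm, abs_of_pos (by linarith)] at hs
    exact floor_sep hw (by linarith)
  have h4 : (Set.Icc (0:ℤ) 3).ncard = 4 := by
    rw [show Set.Icc (0:ℤ) 3 = ↑(Finset.Icc (0:ℤ) 3) by simp, Set.ncard_coe_finset]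
    rfl
  calc t.ncard ≤ (Set.Icc (0:ℤ) 3).ncard := by
        apply Set.ncard_le_ncard_of_injOn (fun y => ⌊(y - a)/w⌋)
        · intro y hy
          obtain ⟨hy1, hy2⟩ := hb y hy
          simp only [Set.mem_Icc]
          refine ⟨Int.floor_nonneg.mpr (div_nonneg (by linarith) hw.le), ?_⟩
          have h4' : ⌊(y - a)/w⌋ < 4 :=
            Int.floor_lt.mpr (by rw [div_lt_iff₀ hw]; push_cast; linarith)
          omega
        · intro y hy y' hy' hf
          by_contra hne
          rcases Ne.lt_or_gt hne with hlt | hlt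
          · exact absurd hf (hmono y hy y' hy' hlt).ne
          · exact absurd hf.symm (hmono y' hy' y hy hlt).ne
  _ = 4 := h4

/-- Separation for rationals with denominator squared at most `2^(j+1)`. -/
lemma sep_pow {j : ℕ} {z z' : ℚ} (hz : z.den ^ 2 ≤ 2 ^ (j+1)) (hz' : z'.den ^ 2 ≤ 2 ^ (j+1))
    (h : z ≠ z') : ((2:ℚ) ^ (j+1))⁻¹ ≤ |z - z'| := by
  have hdd : z.den * z'.den ≤ 2 ^ (j+1) := by
    have : (z.den * z'.den) ^ 2 ≤ (2 ^ (j+1)) ^ 2 := by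
      calc (z.den * z'.den) ^ 2 = z.den ^ 2 * z'.den ^ 2 := by ring
      _ ≤ 2 ^ (j+1) * 2 ^ (j+1) := Nat.mul_le_mul hz hz'
      _ = (2 ^ (j+1)) ^ 2 := by ring
    exact (Nat.pow_le_pow_iff_left (by norm_num)).mp this
  refine le_trans ?_ (rat_gap z z' h)
  apply inv_anti₀ (by positivity)
  exact_mod_cast hdd

theorem stmt7 (j : ℕ) (hj : 1 ≤ j) :
    (∀ p q : ℕ, 1 ≤ q → p ≤ q - 1 → 2 ^ j < q ^ 2 → q ^ 2 ≤ 2 ^ (j + 1) →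
      ({z : ℚ | 2 ^ j < z.den ^ 2 ∧ z.den ^ 2 ≤ 2 ^ (j + 1) ∧
          |(z : ℝ) - (p : ℝ) / q| ≤ ((q : ℝ) ^ 2)⁻¹}).ncard ≤ 4) ∧
    ∃ c : ℚ → Fin 4,
      ∀ z z' : ℚ, z ∈ Icc (0:ℚ) 1 → z' ∈ Icc (0:ℚ) 1 →
        2 ^ j < z.den ^ 2 → z.den ^ 2 ≤ 2 ^ (j + 1) →
        2 ^ j < z'.den ^ 2 → z'.den ^ 2 ≤ 2 ^ (j + 1) →
        z ≠ z' → c z = c z' →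
        Disjoint (closedBall (z : ℝ) (((z.den : ℝ) ^ 2)⁻¹))
          (closedBall (z' : ℝ) (((z'.den : ℝ) ^ 2)⁻¹)) := by
  have hw : (0:ℚ) < ((2:ℚ) ^ (j+1))⁻¹ := by positivity
  set w : ℚ := ((2:ℚ) ^ (j+1))⁻¹ with hwdef
  constructor
  · -- part (a)
    intro p q hq hp h1 h2
    rw [← Set.ncard_image_of_injective _ (Rat.cast_injective (α := ℝ))]
    have hq2 : (2:ℝ) ^ j < (q:ℝ) ^ 2 := by exact_mod_cast h1
    have hwR : (0:ℝ) < ((2:ℝ) ^ (j+1))⁻¹ := by positivity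
    have hhalf : ((q:ℝ) ^ 2)⁻¹ < 2 * ((2:ℝ) ^ (j+1))⁻¹ := by
      have e1 : (2:ℝ) * ((2:ℝ) ^ (j+1))⁻¹ = ((2:ℝ) ^ j)⁻¹ := by
        rw [pow_succ]
        field_simp
      rw [e1]
      apply inv_strictAnti₀ (by positivity) hq2
    apply count4 (a := (p:ℝ)/q - ((q:ℝ)^2)⁻¹) (w := ((2:ℝ) ^ (j+1))⁻¹) hwR
    · rintro y ⟨z, ⟨hz1, hz2, hz3⟩, rfl⟩
      obtain ⟨ha, hb⟩ := abs_le.mp hz3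
      constructor
      · linarith
      · linarith
    · rintro y ⟨z, ⟨hz1, hz2, hz3⟩, rfl⟩ y' ⟨z', ⟨hz'1, hz'2, hz'3⟩, rfl⟩ hne
      have hne' : z ≠ z' := fun h => hne (by rw [h])
      have hsp := sep_pow hz2 hz'2 hne'
      have hcast : (((((2:ℚ) ^ (j+1))⁻¹ : ℚ)) : ℝ) ≤ ((|z - z'| : ℚ) : ℝ) := Rat.cast_le.mpr hsp
      push_cast at hcast
      convert hcast using 2
  · -- part (b)
    set S : Set ℚ := {y | y ∈ Set.Icc (0:ℚ) 1 ∧ 2^j < y.den^2 ∧ y.den^2 ≤ 2^(j+1)} with hSdef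
    have hsepS : ∀ y ∈ S, ∀ y' ∈ S, y ≠ y' → w ≤ |y - y'| :=
      fun y hy y' hy' hne => sep_pow hy.2.2 hy'.2.2 hne
    have hSfin : S.Finite := by
      apply Set.Finite.of_finite_image (f := fun y => ⌊y / w⌋)
      · apply Set.Finite.subset (Set.finite_Icc (0:ℤ) ⌊1 / w⌋)
        rintro _ ⟨y, hy, rfl⟩
        simp only [Set.mem_Icc]
        obtain ⟨⟨hy0, hy1⟩, -⟩ := hy
        exact ⟨Int.floor_nonneg.mpr (div_nonneg hy0 hw.le),
          Int.floor_le_floor (by gcongr)⟩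
      · intro y hy y' hy' hf
        by_contra hne
        have hs := hsepS y hy y' hy' hne
        rcases Ne.lt_or_gt hne with hlt | hlt
        · rw [abs_sub_comm, abs_of_pos (by linarith)] at hs
          exact absurd hf (floor_sep hw (by linarith)).ne
        · rw [abs_of_pos (by linarith)] at hs
          exact absurd hf.symm (floor_sep hw (by linarith)).ne
    refine ⟨fun u => ⟨{y | y ∈ S ∧ y < u}.ncard % 4, by omega⟩, ?_⟩
    have key : ∀ z z' : ℚ, z ∈ S → z' ∈ S → z < z' →
        {y | y ∈ S ∧ y < z}.ncard % 4 = {y | y ∈ S ∧ y < z'}.ncard % 4 →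
        Disjoint (closedBall (z : ℝ) (((z.den : ℝ) ^ 2)⁻¹))
          (closedBall (z' : ℝ) (((z'.den : ℝ) ^ 2)⁻¹)) := by
      intro z z' hz hz' hlt hc
      by_contra hdisj
      obtain ⟨x, hx1, hx2⟩ := Set.not_disjoint_iff.mp hdisj
      rw [Metric.mem_closedBall] at hx1 hx2
      -- distance bound
      have hzr : (2:ℝ)^j < ((z.den:ℝ))^2 := by exact_mod_cast hz.2.1
      have hz'r : (2:ℝ)^j < ((z'.den:ℝ))^2 := by exact_mod_cast hz'.2.1
      have htri : dist (z:ℝ) (z':ℝ) ≤ ((z.den:ℝ)^2)⁻¹ + ((z'.den:ℝ)^2)⁻¹ := by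
        calc dist (z:ℝ) (z':ℝ) ≤ dist (z:ℝ) x + dist x (z':ℝ) := dist_triangle _ _ _
        _ = dist x (z:ℝ) + dist x (z':ℝ) := by rw [dist_comm (z:ℝ) x]
        _ ≤ _ := add_le_add hx1 hx2
      have hlt4 : z' - z < 4 * w := by
        have e1 : (4:ℝ) * ((2:ℝ) ^ (j+1))⁻¹ = 2 * ((2:ℝ) ^ j)⁻¹ := by
          rw [pow_succ]
          field_simp
          ring
        have i1 : ((z.den:ℝ)^2)⁻¹ < ((2:ℝ)^j)⁻¹ := inv_strictAnti₀ (by positivity) hzr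
        have i2 : ((z'.den:ℝ)^2)⁻¹ < ((2:ℝ)^j)⁻¹ := inv_strictAnti₀ (by positivity) hz'r
        have habs : (z':ℝ) - z ≤ dist (z:ℝ) (z':ℝ) := by
          rw [Real.dist_eq, abs_sub_comm]
          exact le_abs_self _
        have : ((z' - z : ℚ) : ℝ) < ((4 * w : ℚ) : ℝ) := by
          push_cast [hwdef]
          rw [e1]
          linarith
        exact_mod_cast this
      -- counting
      set A : Set ℚ := {y | y ∈ S ∧ y < z} with hA
      set A' : Set ℚ := {y | y ∈ S ∧ y < z'} with hA'
      set M : Set ℚ := {y | y ∈ S ∧ z ≤ y ∧ y < z'} with hM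
      have hMfin : M.Finite := hSfin.subset (fun y hy => hy.1)
      have hAfin : A.Finite := hSfin.subset (fun y hy => hy.1)
      have hsplit : A' = A ∪ M := by
        ext y
        simp only [hA, hA', hM, Set.mem_setOf_eq, Set.mem_union]
        constructor
        · rintro ⟨hyS, hy⟩
          rcases lt_or_ge y z with h | h
          · exact Or.inl ⟨hyS, h⟩
          · exact Or.inr ⟨hyS, h, hy⟩
        · rintro (⟨hyS, hy⟩ | ⟨hyS, -, hy2⟩)
          · exact ⟨hyS, hy.trans hlt⟩
          · exact ⟨hyS, hy2⟩
      have hdisjAM : Disjoint A M := by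
        rw [Set.disjoint_left]
        rintro y ⟨-, hy⟩ ⟨-, hy2, -⟩
        exact absurd hy (not_lt.mpr hy2)
      have hcard : A'.ncard = A.ncard + M.ncard := by
        rw [hsplit, Set.ncard_union_eq hdisjAM hAfin hMfin]
      have hM1 : 0 < M.ncard := (Set.ncard_pos hMfin).mpr ⟨z, hz, le_refl z, hlt⟩
      have hM4 : 4 ≤ M.ncard := by omega
      have hz'M : z' ∉ M := fun h => absurd h.2.2 (lt_irrefl z')
      have hTcard : (insert z' M).ncard = M.ncard + 1 :=
        Set.ncard_insert_of_notMem hz'M hMfin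
      have hT4 : (insert z' M).ncard ≤ 4 := by
        apply count4 (a := z) (w := w) hw
        · rintro y (rfl | ⟨-, hy1, hy2⟩)
          · exact ⟨hlt.le, by linarith⟩
          · exact ⟨hy1, by linarith⟩
        · intro y hy y' hy' hne
          have hyS : y ∈ S := by rcases hy with rfl | h; exacts [hz', h.1]
          have hy'S : y' ∈ S := by rcases hy' with rfl | h; exacts [hz', h.1]
          exact hsepS y hyS y' hy'S hne
      omega
    intro z z' hz01 hz'01 h1 h2 h3 h4 hne hc
    have hcc : {y | y ∈ S ∧ y < z}.ncard % 4 = {y | y ∈ S ∧ y < z'}.ncard % 4 := by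
      simpa using congrArg Fin.val hc
    rcases hne.lt_or_gt with h | h
    · exact key z z' ⟨hz01, h1, h2⟩ ⟨hz'01, h3, h4⟩ h hcc
    · exact (key z' z ⟨hz'01, h3, h4⟩ ⟨hz01, h1, h2⟩ h hcc.symm).symm
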